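/- Let n ≥ 1, 0 < β ≤ 1, 0 < α₁, α₂ > 0, and δ ≥ 0. Let M and M₊ be n×n real symmetric matrices with vᵀ M v ≥ α₁‖v‖² and 0 ≤ vᵀ M₊ v ≤ α₂‖v‖² for all v ∈ ℝⁿ. Let F and F̃ be n×n real matrices with Fᵀ M₊ F ⪯ (1−β) M and ‖F̃ − F‖ ≤ δ in the operator norm induced by the Euclidean norm. Then F̃ᵀ M₊ F̃ ⪯ (1−β_ℓ) M, where β_ℓ = β − (α₂/α₁)·δ·(2‖F‖ + δ). -/

import Mathlib

open Matrix

/-- The Euclidean norm of a vector in `ℝⁿ`. -/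
noncomputable def euclNorm {n : ℕ} (v : Fin n → ℝ) : ℝ :=
  Real.sqrt (v ⬝ᵥ v)

/-- The operator norm of a square real matrix induced by the Euclidean norm. -/
noncomputable def euclOpNorm {n : ℕ} (A : Matrix (Fin n) (Fin n) ℝ) : ℝ :=
  ‖Matrix.toEuclideanCLM (𝕜 := ℝ) A‖


lemma euclNorm_eq {n : ℕ} (v : Fin n → ℝ) :
    euclNorm v = ‖(WithLp.equiv 2 (Fin n → ℝ)).symm v‖ := by
  rw [EuclideanSpace.norm_eq, euclNorm, dotProduct]
  congr 1
  refine Finset.sum_congr rfl fun i _ => ?_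
  simp [Real.norm_eq_abs, sq_abs, sq]

lemma euclNorm_nonneg {n : ℕ} (v : Fin n → ℝ) : 0 ≤ euclNorm v := Real.sqrt_nonneg _

lemma euclNorm_mulVec_le {n : ℕ} (A : Matrix (Fin n) (Fin n) ℝ) (v : Fin n → ℝ) :
    euclNorm (A *ᵥ v) ≤ euclOpNorm A * euclNorm v := by
  rw [euclNorm_eq, euclNorm_eq]
  have := (Matrix.toEuclideanCLM (𝕜 := ℝ) A).le_opNorm ((WithLp.equiv 2 (Fin n → ℝ)).symm v)
  rwa [WithLp.equiv_symm_apply, Matrix.toEuclideanCLM_toLp] at this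

lemma dot_CS {n : ℕ} (x y : Fin n → ℝ) : x ⬝ᵥ y ≤ euclNorm x * euclNorm y := by
  rw [euclNorm_eq, euclNorm_eq]
  have h := real_inner_le_norm ((WithLp.equiv 2 (Fin n → ℝ)).symm x)
    ((WithLp.equiv 2 (Fin n → ℝ)).symm y)
  rwa [show (inner ℝ ((WithLp.equiv 2 (Fin n → ℝ)).symm x) ((WithLp.equiv 2 (Fin n → ℝ)).symm y) : ℝ)
      = x ⬝ᵥ y from by simp [PiLp.inner_apply, dotProduct, mul_comm]] at h

open scoped MatrixOrder in
lemma quad_CS {n : ℕ} (Mp : Matrix (Fin n) (Fin n) ℝ) (hP : Mp.PosSemidef)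
    (x y : Fin n → ℝ) :
    x ⬝ᵥ Mp *ᵥ y ≤ Real.sqrt (x ⬝ᵥ Mp *ᵥ x) * Real.sqrt (y ⬝ᵥ Mp *ᵥ y) := by
  set S := CFC.sqrt Mp with hSdef
  have hSh : Sᵀ = S := by
    have := (Matrix.nonneg_iff_posSemidef.mp (CFC.sqrt_nonneg Mp)).1
    simpa [Matrix.IsHermitian, Matrix.conjTranspose_eq_transpose_of_trivial] using this
  have hSS : S * S = Mp := CFC.sqrt_mul_sqrt_self Mp (Matrix.nonneg_iff_posSemidef.mpr hP)
  have key : ∀ a b : Fin n → ℝ, a ⬝ᵥ Mp *ᵥ b = (S *ᵥ a) ⬝ᵥ (S *ᵥ b) := by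
    intro a b
    rw [← hSS, ← Matrix.mulVec_mulVec, Matrix.dotProduct_mulVec a S,
      ← Matrix.mulVec_transpose, hSh]
  rw [key, key, key]
  calc (S *ᵥ x) ⬝ᵥ (S *ᵥ y) ≤ euclNorm (S *ᵥ x) * euclNorm (S *ᵥ y) := dot_CS _ _
    _ = _ := by rw [euclNorm, euclNorm]

/-- robustness of the contraction condition to Jacobian perturbations.
With `α₁‖v‖² ≤ vᵀ M v`, `0 ≤ vᵀ Mp v ≤ α₂‖v‖²`, `Fᵀ Mp F ⪯ (1-β) M` (`P ⪯ Q` meaning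
`Q - P` positive semidefinite), and `‖F' - F‖ ≤ δ` in the Euclidean-induced operator
norm, the perturbed Jacobian satisfies `F'ᵀ Mp F' ⪯ (1-β_ℓ) M` with
`β_ℓ = β - (α₂/α₁) δ (2‖F‖ + δ)`. -/
theorem contraction_condition_jacobian_robustness
    (n : ℕ) (hn : 1 ≤ n) (β α₁ α₂ δ : ℝ)
    (hβ0 : 0 < β) (hβ1 : β ≤ 1) (hα₁ : 0 < α₁) (hα₂ : 0 < α₂) (hδ : 0 ≤ δ)
    (M Mp : Matrix (Fin n) (Fin n) ℝ) (hM : M.IsHermitian) (hMp : Mp.IsHermitian)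
    (hMlb : ∀ v : Fin n → ℝ, α₁ * (euclNorm v) ^ 2 ≤ v ⬝ᵥ M.mulVec v)
    (hMp0 : ∀ v : Fin n → ℝ, 0 ≤ v ⬝ᵥ Mp.mulVec v)
    (hMpub : ∀ v : Fin n → ℝ, v ⬝ᵥ Mp.mulVec v ≤ α₂ * (euclNorm v) ^ 2)
    (F F' : Matrix (Fin n) (Fin n) ℝ)
    (hF : ((1 - β) • M - Fᵀ * Mp * F).PosSemidef)
    (hFF' : euclOpNorm (F' - F) ≤ δ) :
    ((1 - (β - α₂ / α₁ * δ * (2 * euclOpNorm F + δ))) • M - F'ᵀ * Mp * F').PosSemidef := by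
  have hP : Mp.PosSemidef := Matrix.PosSemidef.of_dotProduct_mulVec_nonneg hMp fun x => by simpa using hMp0 x
  set E := F' - F with hE
  have hF' : F' = F + E := by rw [hE]; abel
  -- quadratic form identity
  have quadId : ∀ (A : Matrix (Fin n) (Fin n) ℝ) (v : Fin n → ℝ),
      v ⬝ᵥ (Aᵀ * Mp * A) *ᵥ v = (A *ᵥ v) ⬝ᵥ Mp *ᵥ (A *ᵥ v) := by
    intro A v
    rw [← Matrix.mulVec_mulVec, ← Matrix.mulVec_mulVec, Matrix.dotProduct_mulVec v Aᵀ,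
      Matrix.vecMul_transpose]
  refine Matrix.PosSemidef.of_dotProduct_mulVec_nonneg ?_ ?_
  · have h1 : (F'ᵀ * Mp * F').IsHermitian := by
      have := Matrix.isHermitian_conjTranspose_mul_mul F' hMp
      simpa [Matrix.conjTranspose_eq_transpose_of_trivial] using this
    have h2 : ((1 - (β - α₂ / α₁ * δ * (2 * euclOpNorm F + δ))) • M).IsHermitian := by
      have hMt : Mᵀ = M := by simpa [Matrix.IsHermitian, Matrix.conjTranspose_eq_transpose_of_trivial] using hM
      simp [Matrix.IsHermitian, Matrix.conjTranspose_smul, hMt]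
    exact h2.sub h1
  intro v
  simp only [star_trivial]
  have hexp : v ⬝ᵥ ((1 - (β - α₂ / α₁ * δ * (2 * euclOpNorm F + δ))) • M - F'ᵀ * Mp * F') *ᵥ v
      = (1 - (β - α₂ / α₁ * δ * (2 * euclOpNorm F + δ))) * (v ⬝ᵥ M *ᵥ v)
        - (F' *ᵥ v) ⬝ᵥ Mp *ᵥ (F' *ᵥ v) := by
    rw [Matrix.sub_mulVec, dotProduct_sub, quadId, Matrix.smul_mulVec,
      dotProduct_smul, smul_eq_mul]
  rw [hexp]
  have hFold : (F *ᵥ v) ⬝ᵥ Mp *ᵥ (F *ᵥ v) ≤ (1 - β) * (v ⬝ᵥ M *ᵥ v) := by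
    have := hF.dotProduct_mulVec_nonneg v
    simp only [star_trivial] at this
    rw [Matrix.sub_mulVec, dotProduct_sub, quadId, Matrix.smul_mulVec,
      dotProduct_smul, smul_eq_mul] at this
    linarith
  -- norms
  have hFv : euclNorm (F *ᵥ v) ≤ euclOpNorm F * euclNorm v := euclNorm_mulVec_le F v
  have hEv : euclNorm (E *ᵥ v) ≤ δ * euclNorm v := by
    have := euclNorm_mulVec_le E v
    have h2 : euclOpNorm E * euclNorm v ≤ δ * euclNorm v :=
      mul_le_mul_of_nonneg_right hFF' (euclNorm_nonneg v)
    linarith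
  have hQ : ∀ x : Fin n → ℝ, Real.sqrt (x ⬝ᵥ Mp *ᵥ x) ≤ Real.sqrt α₂ * euclNorm x := by
    intro x
    have : Real.sqrt (x ⬝ᵥ Mp *ᵥ x) ≤ Real.sqrt (α₂ * (euclNorm x) ^ 2) :=
      Real.sqrt_le_sqrt (hMpub x)
    rwa [Real.sqrt_mul hα₂.le, Real.sqrt_sq (euclNorm_nonneg x)] at this
  have hcross : (F *ᵥ v) ⬝ᵥ Mp *ᵥ (E *ᵥ v)
      ≤ α₂ * (euclOpNorm F * euclNorm v) * (δ * euclNorm v) := by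
    calc (F *ᵥ v) ⬝ᵥ Mp *ᵥ (E *ᵥ v)
        ≤ Real.sqrt ((F *ᵥ v) ⬝ᵥ Mp *ᵥ (F *ᵥ v)) * Real.sqrt ((E *ᵥ v) ⬝ᵥ Mp *ᵥ (E *ᵥ v)) :=
          quad_CS Mp hP _ _
      _ ≤ (Real.sqrt α₂ * euclNorm (F *ᵥ v)) * (Real.sqrt α₂ * euclNorm (E *ᵥ v)) := by
          exact mul_le_mul (hQ _) (hQ _) (Real.sqrt_nonneg _)
            (mul_nonneg (Real.sqrt_nonneg _) (euclNorm_nonneg _))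
      _ = (Real.sqrt α₂ * Real.sqrt α₂) * (euclNorm (F *ᵥ v) * euclNorm (E *ᵥ v)) := by ring
      _ = α₂ * (euclNorm (F *ᵥ v) * euclNorm (E *ᵥ v)) := by
          rw [Real.mul_self_sqrt hα₂.le]
      _ ≤ α₂ * ((euclOpNorm F * euclNorm v) * (δ * euclNorm v)) := by
          apply mul_le_mul_of_nonneg_left _ hα₂.le
          exact mul_le_mul hFv hEv (euclNorm_nonneg _)
            (mul_nonneg (norm_nonneg _) (euclNorm_nonneg _))
      _ = _ := by ring
  have hEE : (E *ᵥ v) ⬝ᵥ Mp *ᵥ (E *ᵥ v) ≤ α₂ * (δ * euclNorm v) ^ 2 := by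
    calc (E *ᵥ v) ⬝ᵥ Mp *ᵥ (E *ᵥ v) ≤ α₂ * (euclNorm (E *ᵥ v)) ^ 2 := hMpub _
      _ ≤ α₂ * (δ * euclNorm v) ^ 2 := by
          apply mul_le_mul_of_nonneg_left _ hα₂.le
          exact pow_le_pow_left₀ (euclNorm_nonneg _) hEv 2
  -- expansion of Q(F'v)
  have hsplit : (F' *ᵥ v) ⬝ᵥ Mp *ᵥ (F' *ᵥ v)
      = (F *ᵥ v) ⬝ᵥ Mp *ᵥ (F *ᵥ v) + 2 * ((F *ᵥ v) ⬝ᵥ Mp *ᵥ (E *ᵥ v))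
        + (E *ᵥ v) ⬝ᵥ Mp *ᵥ (E *ᵥ v) := by
    have hsym : (E *ᵥ v) ⬝ᵥ Mp *ᵥ (F *ᵥ v) = (F *ᵥ v) ⬝ᵥ Mp *ᵥ (E *ᵥ v) := by
      rw [Matrix.dotProduct_mulVec, ← Matrix.mulVec_transpose,
        show Mpᵀ = Mp from by simpa [Matrix.IsHermitian, Matrix.conjTranspose_eq_transpose_of_trivial] using hMp,
        dotProduct_comm]
    rw [hF', Matrix.add_mulVec, Matrix.mulVec_add, dotProduct_add,
      add_dotProduct, add_dotProduct, hsym]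
    ring
  -- M lower bound, nonneg, and final arithmetic
  have hvM : α₁ * (euclNorm v) ^ 2 ≤ v ⬝ᵥ M *ᵥ v := hMlb v
  have hvM0 : 0 ≤ v ⬝ᵥ M *ᵥ v := le_trans (by positivity) hvM
  have hFn : 0 ≤ euclOpNorm F := norm_nonneg _
  have hvn : 0 ≤ euclNorm v := euclNorm_nonneg v
  have hcoef : α₂ * δ * (2 * euclOpNorm F + δ) * (euclNorm v) ^ 2
      ≤ α₂ / α₁ * δ * (2 * euclOpNorm F + δ) * (v ⬝ᵥ M *ᵥ v) := by
    have h0 : 0 ≤ α₂ / α₁ * δ * (2 * euclOpNorm F + δ) := by positivity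
    have := mul_le_mul_of_nonneg_left hvM h0
    calc α₂ * δ * (2 * euclOpNorm F + δ) * (euclNorm v) ^ 2
        = α₂ / α₁ * δ * (2 * euclOpNorm F + δ) * (α₁ * (euclNorm v) ^ 2) := by
          field_simp
      _ ≤ _ := this
  nlinarith [hcross, hEE, hFold, hsplit, hcoef, sq_nonneg (euclNorm v)]
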